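/- arXiv:2605.12390 — 2 statements merged into one kernel-verified Lean document; each statement's English description precedes it below -/
import Mathlib

section
/- The orbit of the set {1, 3, 26, 28} under S ↦ reflexive reduction of x·S modulo 81, as x ranges over integers coprime to 81, consists of exactly the nine sets {1,3,26,28}, {2,6,25,29}, {4,12,23,31}, {5,15,22,32}, {7,20,21,34}, {8,19,24,35}, {10,17,30,37}, {11,16,33,38}, {13,14,39,40}. -/
/-- Reflexive modular reduction of `r` modulo `n`: `min (r mod n, n - r mod n)`. -/
def reflRed (n : ℕ) (r : ℤ) : ℤ := min (r % (n : ℤ)) ((n : ℤ) - r % (n : ℤ))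

/-- Reflexive reduction of the set `x • R` modulo `n`. -/
def reflRedSet (n : ℕ) (x : ℤ) (R : Finset ℤ) : Finset ℤ :=
  R.image (fun r => reflRed n (x * r))

/-- The circulant graph `C_n(S)` on `ZMod n`. -/
def circulant (n : ℕ) (S : Finset ℤ) : SimpleGraph (ZMod n) where
  Adj a b := a ≠ b ∧ ∃ s ∈ S, a - b = (s : ZMod n) ∨ a - b = -(s : ZMod n)
  symm := by
    constructor
    rintro a b ⟨hab, s, hs, h⟩
    refine ⟨hab.symm, s, hs, ?_⟩
    have hba : b - a = -(a - b) := (neg_sub a b).symm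
    rcases h with h | h
    · right; rw [hba, h]
    · left; rw [hba, h, neg_neg]
  loopless := by constructor; rintro a ⟨h, -⟩; exact h rfl

lemma reflRed_mod (x r : ℤ) : reflRed 81 (x * r) = reflRed 81 (x % 81 * r) := by
  have h : (x * r) % 81 = (x % 81 * r) % 81 := by
    conv_lhs => rw [Int.mul_emod]
    conv_rhs => rw [Int.mul_emod, Int.emod_emod_of_dvd _ dvd_rfl]
  unfold reflRed
  push_cast
  rw [h]

lemma reflRedSet_mod (x : ℤ) (R : Finset ℤ) :
    reflRedSet 81 x R = reflRedSet 81 (x % 81) R :=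
  Finset.image_congr (fun r _ => reflRed_mod x r)

lemma key : ∀ y ∈ Finset.Ico (0:ℤ) 81, Int.gcd y 81 = 1 →
    reflRedSet 81 y ({1, 3, 26, 28} : Finset ℤ) = ({1, 3, 26, 28} : Finset ℤ) ∨
    reflRedSet 81 y ({1, 3, 26, 28} : Finset ℤ) = ({2, 6, 25, 29} : Finset ℤ) ∨
    reflRedSet 81 y ({1, 3, 26, 28} : Finset ℤ) = ({4, 12, 23, 31} : Finset ℤ) ∨
    reflRedSet 81 y ({1, 3, 26, 28} : Finset ℤ) = ({5, 15, 22, 32} : Finset ℤ) ∨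
    reflRedSet 81 y ({1, 3, 26, 28} : Finset ℤ) = ({7, 20, 21, 34} : Finset ℤ) ∨
    reflRedSet 81 y ({1, 3, 26, 28} : Finset ℤ) = ({8, 19, 24, 35} : Finset ℤ) ∨
    reflRedSet 81 y ({1, 3, 26, 28} : Finset ℤ) = ({10, 17, 30, 37} : Finset ℤ) ∨
    reflRedSet 81 y ({1, 3, 26, 28} : Finset ℤ) = ({11, 16, 33, 38} : Finset ℤ) ∨
    reflRedSet 81 y ({1, 3, 26, 28} : Finset ℤ) = ({13, 14, 39, 40} : Finset ℤ) := by
  decide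

theorem stmt14 :
    {S : Finset ℤ | ∃ x : ℤ, Int.gcd x 81 = 1 ∧ S = reflRedSet 81 x ({1, 3, 26, 28} : Finset ℤ)} =
      {({1, 3, 26, 28} : Finset ℤ), {2, 6, 25, 29}, {4, 12, 23, 31}, {5, 15, 22, 32},
        {7, 20, 21, 34}, {8, 19, 24, 35}, {10, 17, 30, 37}, {11, 16, 33, 38},
        {13, 14, 39, 40}} := by
  ext S
  simp only [Set.mem_setOf_eq, Set.mem_insert_iff, Set.mem_singleton_iff]
  constructor
  · rintro ⟨x, hg, rfl⟩
    have h81 : (0:ℤ) < 81 := by norm_num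
    have hmem : x % 81 ∈ Finset.Ico (0:ℤ) 81 := by
      simp [Int.emod_nonneg x (by norm_num : (81:ℤ) ≠ 0), Int.emod_lt_of_pos x h81]
    have hc : IsCoprime x (81:ℤ) := Int.isCoprime_iff_gcd_eq_one.mpr hg
    have hc' : IsCoprime (x % 81) (81:ℤ) := by
      have := hc.add_mul_left_left (-(x / 81))
      rwa [mul_neg, ← sub_eq_add_neg, ← Int.emod_def] at this
    have hg' : Int.gcd (x % 81) 81 = 1 := Int.isCoprime_iff_gcd_eq_one.mp hc'
    rw [reflRedSet_mod]
    exact key _ hmem hg'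
  · rintro (h | h | h | h | h | h | h | h | h) <;> subst h
    · exact ⟨1, by decide, by decide⟩
    · exact ⟨2, by decide, by decide⟩
    · exact ⟨4, by decide, by decide⟩
    · exact ⟨5, by decide, by decide⟩
    · exact ⟨7, by decide, by decide⟩
    · exact ⟨8, by decide, by decide⟩
    · exact ⟨10, by decide, by decide⟩
    · exact ⟨11, by decide, by decide⟩
    · exact ⟨13, by decide, by decide⟩
end

section
/- The map φ : ZMod 32 → ZMod 32 defined by φ(v) = v + 8·(v mod 2) (where v mod 2 ∈ {0,1} is the parity of the canonical representative) is a graph isomorphism from C_32(1, 2, 15) to C_32(2, 7, 9), and there is no integer x coprime to 32 whose reflexive modular reduction of x·{1,2,15} modulo 32 equals {2,7,9}. -/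
instance (n : ℕ) (S : Finset ℤ) : DecidableRel (circulant n S).Adj := fun a b =>
  decidable_of_iff (a ≠ b ∧ ∃ s ∈ S, a - b = (s : ZMod n) ∨ a - b = -(s : ZMod n)) Iff.rfl

lemma reflRedSet_emod (x : ℤ) (R : Finset ℤ) :
    reflRedSet 32 x R = reflRedSet 32 (x % 32) R := by
  unfold reflRedSet reflRed
  apply Finset.image_congr
  intro r _
  have : x * r % (32 : ℤ) = x % 32 * r % 32 := by
    conv_rhs => rw [Int.mul_emod, Int.emod_emod_of_dvd _ dvd_rfl, ← Int.mul_emod]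
  simp [this]

theorem stmt18 :
    (Function.Bijective (fun v : ZMod 32 => v + ((8 * (v.val % 2) : ℕ) : ZMod 32)) ∧
      ∀ a b : ZMod 32, (circulant 32 ({1, 2, 15} : Finset ℤ)).Adj a b ↔
        (circulant 32 ({2, 7, 9} : Finset ℤ)).Adj
          (a + ((8 * (a.val % 2) : ℕ) : ZMod 32)) (b + ((8 * (b.val % 2) : ℕ) : ZMod 32))) ∧
    ¬ ∃ x : ℤ, Int.gcd x 32 = 1 ∧
      reflRedSet 32 x ({1, 2, 15} : Finset ℤ) = {2, 7, 9} := by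
  refine ⟨⟨by decide, by decide⟩, ?_⟩
  rintro ⟨x, hg, hs⟩
  rw [reflRedSet_emod] at hs
  have hc : IsCoprime x (32 : ℤ) := Int.isCoprime_iff_gcd_eq_one.mpr hg
  have hg' : Int.gcd (x % 32) 32 = 1 := by
    apply Int.isCoprime_iff_gcd_eq_one.mp
    rw [Int.emod_def, sub_eq_add_neg, ← mul_neg, mul_comm]
    exact hc.add_mul_right_left _
  have hy0 : 0 ≤ x % 32 := Int.emod_nonneg x (by norm_num)
  have hy32 : x % 32 < 32 := Int.emod_lt_of_pos x (by norm_num)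
  set y := x % 32 with hy
  clear_value y
  interval_cases y <;> revert hg' hs <;> decide
end
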